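/- Let λ₁, …, λ_d be real numbers. Then all λ_i are nonnegative if and only if the m-th elementary symmetric polynomial e_m(λ₁, …, λ_d) is nonnegative for every m ∈ {1, …, d}. -/

import Mathlib

/-- The `m`-th elementary symmetric polynomial of `x₁, …, x_d`. -/
noncomputable def esymmFun {d : ℕ} (m : ℕ) (x : Fin d → ℝ) : ℝ :=
  ∑ t ∈ Finset.powersetCard m Finset.univ, ∏ i ∈ t, x i

lemma prod_add_esymm {d : ℕ} (lam : Fin d → ℝ) (t : ℝ) :
    ∏ i, (lam i + t) = ∑ m ∈ Finset.range (d + 1), esymmFun m lam * t ^ (d - m) := by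
  rw [Finset.prod_add, Finset.powerset_card_disjiUnion]
  erw [Finset.sum_disjiUnion]
  simp only [Finset.card_univ, Fintype.card_fin]
  refine Finset.sum_congr rfl fun m hm => ?_
  rw [esymmFun, Finset.sum_mul]
  refine Finset.sum_congr rfl fun s hs => ?_
  rw [Finset.mem_powersetCard] at hs
  rw [Finset.prod_const]
  congr 1
  rw [Finset.card_sdiff_of_subset (Finset.subset_univ s), Finset.card_univ, Fintype.card_fin, hs.2]

/-- Real numbers `λ₁, …, λ_d` are all nonnegative if and only if
`e_m(λ₁, …, λ_d) ≥ 0` for every `m ∈ {1, …, d}`. -/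
theorem nonneg_iff_esymm_nonneg {d : ℕ} (lam : Fin d → ℝ) :
    (∀ i, 0 ≤ lam i) ↔ ∀ m ∈ Finset.Icc 1 d, 0 ≤ esymmFun m lam := by
  constructor
  · intro h m _
    exact Finset.sum_nonneg fun s _ => Finset.prod_nonneg fun i _ => h i
  · intro h i
    by_contra hi
    push_neg at hi
    set t : ℝ := -lam i with ht
    have htpos : 0 < t := by linarith
    have hzero : ∏ j, (lam j + t) = 0 :=
      Finset.prod_eq_zero (Finset.mem_univ i) (by simp [ht])
    rw [prod_add_esymm] at hzero
    have hsplit : ∑ m ∈ Finset.range (d + 1), esymmFun m lam * t ^ (d - m)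
        = t ^ d + ∑ m ∈ Finset.Icc 1 d, esymmFun m lam * t ^ (d - m) := by
      have hset : Finset.range (d + 1) = insert 0 (Finset.Icc 1 d) := by
        ext x; simp [Finset.mem_Icc]; omega
      rw [hset, Finset.sum_insert (by simp)]
      simp [esymmFun]
    rw [hsplit] at hzero
    have hsum : 0 ≤ ∑ m ∈ Finset.Icc 1 d, esymmFun m lam * t ^ (d - m) :=
      Finset.sum_nonneg fun m hm =>
        mul_nonneg (h m hm) (pow_nonneg htpos.le _)
    have : (0:ℝ) < t ^ d := pow_pos htpos d
    linarith
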